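/- If α is an even nonnegative integer, β is an odd nonnegative integer, and |β − α| ≠ 1, then S(α,β) = 0. -/

import Mathlib

open MeasureTheory Real

/-- The probabilist's Hermite polynomial evaluated at a real number. -/
noncomputable def He (n : ℕ) (x : ℝ) : ℝ := Polynomial.aeval x (Polynomial.hermite n)

/-- The half-space Hermite-Gaussian integral `S(α,β)`. -/
noncomputable def S (a b : ℕ) : ℝ :=
  ∫ x in Set.Iic (0 : ℝ), x * He a x * He b x * Real.exp (-x ^ 2 / 2)

section Aux

open Polynomial Filter Asymptotics Set

/-- Derivative of the Hermite polynomial. -/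
lemma derivative_hermite (n : ℕ) :
    Polynomial.derivative (Polynomial.hermite (n + 1)) =
      Polynomial.C ((n : ℤ) + 1) * Polynomial.hermite n := by
  induction n with
  | zero => simp [Polynomial.hermite_one, Polynomial.hermite_zero]
  | succ n ih =>
    have h2 := Polynomial.hermite_succ n
    rw [Polynomial.hermite_succ (n + 1), derivative_sub, derivative_mul, derivative_X, ih,
      derivative_mul, derivative_C, h2]
    push_cast
    simp only [map_add, map_one]
    ring

lemma aeval_derivative_hermite (n : ℕ) (x : ℝ) :
    (Polynomial.aeval x (Polynomial.derivative (Polynomial.hermite n)) : ℝ)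
      = (n : ℝ) * He (n - 1) x := by
  cases n with
  | zero => simp
  | succ n =>
    rw [derivative_hermite, map_mul, Polynomial.aeval_C]
    simp only [Nat.add_sub_cancel, He, algebraMap_int_eq, eq_intCast, Int.cast_add,
      Int.cast_natCast, Int.cast_one]
    push_cast
    ring

lemma hasDerivAt_He (n : ℕ) (x : ℝ) :
    HasDerivAt (He n) ((n : ℝ) * He (n - 1) x) x := by
  have h := Polynomial.hasDerivAt_aeval (q := Polynomial.hermite n) (𝕜 := ℝ) x
  rw [aeval_derivative_hermite] at h
  exact h

lemma continuous_He (n : ℕ) : Continuous (He n) :=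
  Polynomial.continuous_aeval (p := Polynomial.hermite n)

lemma He_odd_zero {n : ℕ} (hn : Odd n) : He n 0 = 0 := by
  have h0 : (Polynomial.hermite n).coeff 0 = 0 :=
    Polynomial.coeff_hermite_of_odd_add (by simpa using hn)
  have h1 := (Polynomial.coeff_zero_eq_aeval_zero' (A := ℝ) (Polynomial.hermite n))
  rw [h0] at h1
  simpa [He] using h1.symm

/-- The Hermite recurrence, evaluated. -/
lemma He_succ_eval (n : ℕ) (x : ℝ) :
    He (n + 1) x = x * He n x - (n : ℝ) * He (n - 1) x := by
  rw [He, Polynomial.hermite_succ, map_sub, map_mul, Polynomial.aeval_X,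
    aeval_derivative_hermite]
  rfl

/-- Polynomial times Gaussian tends to zero at `atTop`. -/
lemma tendsto_poly_gauss_atTop (q : ℝ[X]) {b : ℝ} (hb : 0 < b) :
    Tendsto (fun x : ℝ => q.eval x * Real.exp (-b * x ^ 2)) atTop (nhds 0) := by
  rw [tendsto_zero_iff_norm_tendsto_zero]
  have hg : Tendsto (fun x : ℝ => ‖q.eval x / Real.exp x‖) atTop (nhds 0) := by
    simpa using (q.tendsto_div_exp_atTop).norm
  refine squeeze_zero' (Filter.Eventually.of_forall fun x => norm_nonneg _) ?_ hg
  filter_upwards [eventually_ge_atTop (max b⁻¹ 1)] with x hx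
  have hx1 : (1 : ℝ) ≤ x := le_trans (le_max_right _ _) hx
  have hxb : b⁻¹ ≤ x := le_trans (le_max_left _ _) hx
  have hexp : Real.exp (-b * x ^ 2) ≤ Real.exp (-x) := by
    apply Real.exp_le_exp.2
    have h1 : 1 ≤ b * x := by
      have := mul_le_mul_of_nonneg_left hxb (le_of_lt hb)
      rwa [mul_inv_cancel₀ (ne_of_gt hb)] at this
    nlinarith
  rw [norm_mul, norm_div]
  rw [Real.norm_eq_abs (Real.exp _), Real.norm_eq_abs (Real.exp _),
    abs_of_pos (Real.exp_pos _), abs_of_pos (Real.exp_pos _), div_eq_mul_inv,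
    ← Real.exp_neg]
  exact mul_le_mul_of_nonneg_left hexp (abs_nonneg _)

lemma tendsto_poly_gauss_atBot (q : ℝ[X]) {b : ℝ} (hb : 0 < b) :
    Tendsto (fun x : ℝ => q.eval x * Real.exp (-b * x ^ 2)) atBot (nhds 0) := by
  have h := (tendsto_poly_gauss_atTop (q.comp (-Polynomial.X)) hb).comp tendsto_neg_atBot_atTop
  refine h.congr fun x => ?_
  simp [Polynomial.eval_comp]

lemma integrable_poly_gauss (q : ℝ[X]) :
    Integrable (fun x : ℝ => q.eval x * Real.exp (-x ^ 2 / 2)) := by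
  have heq : (fun x : ℝ => q.eval x * Real.exp (-x ^ 2 / 2)) =
      fun x : ℝ => q.eval x * Real.exp (-(1/2 : ℝ) * x ^ 2) := by
    funext x; ring_nf
  rw [heq]
  have hg : Integrable (fun x : ℝ => Real.exp (-(1/4 : ℝ) * x ^ 2)) :=
    integrable_exp_neg_mul_sq (by norm_num)
  have hcont : Continuous (fun x : ℝ => q.eval x * Real.exp (-(1/2 : ℝ) * x ^ 2)) :=
    (Polynomial.continuous q).mul (Real.continuous_exp.comp (by fun_prop))
  have key : ∀ (l : Filter ℝ),
      Tendsto (fun x : ℝ => q.eval x * Real.exp (-(1/4 : ℝ) * x ^ 2)) l (nhds 0) →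
      (fun x : ℝ => q.eval x * Real.exp (-(1/2 : ℝ) * x ^ 2)) =O[l]
        fun x : ℝ => Real.exp (-(1/4 : ℝ) * x ^ 2) := by
    intro l hl
    rw [isBigO_iff]
    refine ⟨1, ?_⟩
    have h1 : ∀ᶠ x in l, ‖q.eval x * Real.exp (-(1/4 : ℝ) * x ^ 2)‖ ≤ 1 := by
      have h2 := hl.norm
      simp only [norm_zero] at h2
      exact h2.eventually_le_const one_pos
    filter_upwards [h1] with x hx
    have hsplit : q.eval x * Real.exp (-(1/2 : ℝ) * x ^ 2)
        = (q.eval x * Real.exp (-(1/4 : ℝ) * x ^ 2)) * Real.exp (-(1/4 : ℝ) * x ^ 2) := by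
      rw [mul_assoc, ← Real.exp_add]; ring_nf
    rw [hsplit, norm_mul]
    have h3 := mul_le_mul_of_nonneg_right hx (norm_nonneg (Real.exp (-(1/4 : ℝ) * x ^ 2)))
    simpa using h3
  exact (hcont.locallyIntegrable).integrable_of_isBigO_atBot_atTop
    (key _ (tendsto_poly_gauss_atBot _ (by norm_num)))
    (hg.integrableAtFilter _)
    (key _ (tendsto_poly_gauss_atTop _ (by norm_num)))
    (hg.integrableAtFilter _)

/-- The real polynomial giving `He`. -/
noncomputable def HeP (n : ℕ) : ℝ[X] :=
  (Polynomial.hermite n).map (algebraMap ℤ ℝ)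

lemma He_eq_eval (n : ℕ) (x : ℝ) : He n x = (HeP n).eval x := by
  rw [He, HeP, Polynomial.eval_map, Polynomial.aeval_def]

lemma integrable_HeHe (a b : ℕ) :
    Integrable (fun x : ℝ => He a x * (He b x * Real.exp (-x ^ 2 / 2))) := by
  have h := integrable_poly_gauss (HeP a * HeP b)
  refine h.congr ?_
  filter_upwards with x
  simp [Polynomial.eval_mul, He_eq_eval, mul_assoc]

lemma tendsto_HeHe_atBot (a b : ℕ) :
    Tendsto (fun x : ℝ => He a x * (He b x * Real.exp (-x ^ 2 / 2))) atBot (nhds 0) := by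
  have heq : (fun x : ℝ => He a x * (He b x * Real.exp (-x ^ 2 / 2))) =
      fun x : ℝ => (HeP a * HeP b).eval x * Real.exp (-(1/2 : ℝ) * x ^ 2) := by
    funext x
    rw [Polynomial.eval_mul, ← He_eq_eval, ← He_eq_eval]
    ring_nf
  rw [heq]
  exact tendsto_poly_gauss_atBot _ (by norm_num)

/-- Derivative of minus the Hermite-Gaussian. -/
lemma hasDerivAt_negHeGauss (n : ℕ) (x : ℝ) :
    HasDerivAt (fun y : ℝ => -(He n y * Real.exp (-y ^ 2 / 2)))
      (He (n + 1) x * Real.exp (-x ^ 2 / 2)) x := by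
  have hw : HasDerivAt (fun y : ℝ => Real.exp (-y ^ 2 / 2))
      (-x * Real.exp (-x ^ 2 / 2)) x := by
    have h1 : HasDerivAt (fun y : ℝ => -y ^ 2 / 2) (-x) x := by
      have h2 : HasDerivAt (fun y : ℝ => y ^ 2) (2 * x) x := by
        simpa using (hasDerivAt_pow 2 x)
      have h3 := (h2.neg).div_const 2
      exact h3.congr_deriv (by ring)
    simpa [mul_comm] using h1.exp
  have h := ((hasDerivAt_He n x).mul hw).neg
  exact h.congr_deriv (by rw [He_succ_eval]; ring)

/-- The half-line Hermite-Hermite-Gaussian integral. -/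
noncomputable def J (m n : ℕ) : ℝ :=
  ∫ x in Set.Iic (0 : ℝ), He m x * (He n x * Real.exp (-x ^ 2 / 2))

lemma J_symm (m n : ℕ) : J m n = J n m := by
  unfold J
  congr 1
  funext x
  ring

/-- The integration-by-parts recursion for `J`. -/
lemma J_rec (m n : ℕ) :
    J m (n + 1) = -(He m 0 * He n 0) + (m : ℝ) * J (m - 1) n := by
  have key := MeasureTheory.integral_Iic_mul_deriv_eq_deriv_mul (a := (0:ℝ))
    (u := He m) (u' := fun x => (m : ℝ) * He (m - 1) x)
    (v := fun y : ℝ => -(He n y * Real.exp (-y ^ 2 / 2)))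
    (v' := fun x => He (n + 1) x * Real.exp (-x ^ 2 / 2))
    (a' := -(He m 0 * He n 0)) (b' := 0)
    (fun x _ => hasDerivAt_He m x)
    (fun x _ => hasDerivAt_negHeGauss n x)
    ((integrable_HeHe m (n + 1)).integrableOn)
    ?_ ?_ ?_
  · have h2 : (∫ x in Set.Iic (0:ℝ),
        ((m : ℝ) * He (m - 1) x) * (-(He n x * Real.exp (-x ^ 2 / 2))))
        = -((m : ℝ) * J (m - 1) n) := by
      rw [show (fun x => ((m : ℝ) * He (m - 1) x) * (-(He n x * Real.exp (-x ^ 2 / 2))))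
          = fun x => (-(m : ℝ)) * (He (m - 1) x * (He n x * Real.exp (-x ^ 2 / 2))) from
          funext fun x => by ring]
      rw [MeasureTheory.integral_const_mul]
      rw [show (∫ x in Set.Iic (0:ℝ), He (m-1) x * (He n x * Real.exp (-x ^ 2 / 2)))
        = J (m-1) n from rfl]
      ring
    have h3 : (∫ x in Set.Iic (0:ℝ), He m x * (He (n+1) x * Real.exp (-x ^ 2 / 2)))
        = -(He m 0 * He n 0) - 0 - ∫ x in Set.Iic (0:ℝ),
          ((m : ℝ) * He (m - 1) x) * (-(He n x * Real.exp (-x ^ 2 / 2))) := key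
    rw [J, h3, h2]
    ring
  · -- hu'v integrable
    have h := ((integrable_HeHe (m - 1) n).const_mul (-(m : ℝ))).integrableOn
      (s := Set.Iic (0:ℝ))
    refine h.congr_fun ?_ measurableSet_Iic
    intro x _
    show (-(m:ℝ)) * (He (m-1) x * (He n x * Real.exp (-x ^ 2 / 2))) = _
    simp only [Pi.mul_apply]
    ring
  · -- limit at 0 from the left
    have hc : Continuous (fun x : ℝ => He m x * -(He n x * Real.exp (-x ^ 2 / 2))) :=
      (continuous_He m).mul (((continuous_He n).mul
        (Real.continuous_exp.comp (by fun_prop))).neg)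
    have h : Filter.Tendsto (fun x : ℝ => He m x * -(He n x * Real.exp (-x ^ 2 / 2)))
        (nhdsWithin (0:ℝ) (Set.Iio 0)) (nhds (He m 0 * -(He n 0 * Real.exp (-(0:ℝ) ^ 2 / 2)))) :=
      (hc.tendsto 0).mono_left nhdsWithin_le_nhds
    have h0 : He m 0 * -(He n 0 * Real.exp (-(0:ℝ) ^ 2 / 2)) = -(He m 0 * He n 0) := by
      simp
    rw [h0] at h
    exact h
  · -- limit at -infinity
    have h := (tendsto_HeHe_atBot m n).neg
    rw [neg_zero] at h
    refine h.congr fun x => ?_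
    simp only [Pi.mul_apply]
    ring

lemma J_eq_zero : ∀ n m : ℕ, Even (m + n) → m ≠ n → J m n = 0 := by
  intro n
  induction n with
  | zero =>
    intro m hev hne
    obtain ⟨k, hk⟩ : ∃ k, m = k + 1 := by
      cases m with
      | zero => exact absurd rfl hne
      | succ k => exact ⟨k, rfl⟩
    have hkodd : Odd k := by
      rcases hev with ⟨t, ht⟩
      exact ⟨t - 1, by omega⟩
    rw [J_symm, hk, J_rec]
    simp [He_odd_zero hkodd]
  | succ n ih =>
    intro m hev hne
    have hodd : Odd (m + n) := by
      rcases hev with ⟨t, ht⟩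
      exact ⟨t - 1, by omega⟩
    rw [J_rec]
    have hbd : He m 0 * He n 0 = 0 := by
      rcases Nat.even_or_odd m with hm | hm
      · have hn : Odd n := by
          rcases hm with ⟨a, ha⟩; rcases hodd with ⟨c, hc⟩
          exact ⟨c - a, by omega⟩
        rw [He_odd_zero hn, mul_zero]
      · rw [He_odd_zero hm, zero_mul]
    rw [hbd]
    cases m with
    | zero => simp
    | succ k =>
      have hz : J k n = 0 := by
        apply ih
        · rcases hodd with ⟨c, hc⟩
          exact ⟨c, by omega⟩
        · intro hkn
          exact hne (by omega)
      rw [show (k + 1 : ℕ) - 1 = k from rfl, hz]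
      simp

end Aux

theorem S_eq_zero_of_even_odd (α β : ℕ) (hα : Even α) (hβ : Odd β)
    (h : |(β : ℤ) - (α : ℤ)| ≠ 1) : S α β = 0 := by
  have hne1 : α ≠ β + 1 := by
    intro he
    subst he
    refine h ?_
    push_cast
    rw [show ((β:ℤ) - ((β:ℤ) + 1)) = -1 from by ring]
    simp
  have hne2 : β ≠ α + 1 := by
    intro he
    subst he
    refine h ?_
    push_cast
    rw [show (((α:ℤ) + 1) - (α:ℤ)) = 1 from by ring]
    simp
  -- rewrite the integrand
  have hptw : ∀ x : ℝ, x * He α x * He β x * Real.exp (-x ^ 2 / 2)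
      = He α x * (He (β + 1) x * Real.exp (-x ^ 2 / 2))
        + (β : ℝ) * (He α x * (He (β - 1) x * Real.exp (-x ^ 2 / 2))) := by
    intro x
    have hx : x * He β x = He (β + 1) x + (β : ℝ) * He (β - 1) x := by
      rw [He_succ_eval]; ring
    calc x * He α x * He β x * Real.exp (-x ^ 2 / 2)
        = (x * He β x) * He α x * Real.exp (-x ^ 2 / 2) := by ring
      _ = (He (β + 1) x + (β : ℝ) * He (β - 1) x) * He α x * Real.exp (-x ^ 2 / 2) := by
          rw [hx]
      _ = _ := by ring
  rw [S]
  rw [MeasureTheory.setIntegral_congr_fun measurableSet_Iic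
    (fun x _ => hptw x)]
  rw [MeasureTheory.integral_add ((integrable_HeHe α (β + 1)).integrableOn)
    (((integrable_HeHe α (β - 1)).const_mul _).integrableOn)]
  rw [MeasureTheory.integral_const_mul]
  have hz1 : J α (β + 1) = 0 := by
    apply J_eq_zero
    · rcases hα with ⟨a, ha⟩; rcases hβ with ⟨c, hc⟩; exact ⟨a + c + 1, by omega⟩
    · exact hne1
  have hz2 : J α (β - 1) = 0 := by
    apply J_eq_zero
    · rcases hα with ⟨a, ha⟩; rcases hβ with ⟨c, hc⟩; exact ⟨a + c, by omega⟩
    · intro he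
      rcases hβ with ⟨c, hc⟩
      exact hne2 (by omega)
  rw [show (∫ x in Set.Iic (0:ℝ), He α x * (He (β+1) x * Real.exp (-x ^ 2 / 2))) = J α (β+1)
    from rfl, show (∫ x in Set.Iic (0:ℝ), He α x * (He (β-1) x * Real.exp (-x ^ 2 / 2)))
    = J α (β-1) from rfl, hz1, hz2]
  ring
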